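/- Let n ≥ 4 and define permutations v(2), in one-line notation, by v(2) = [n, n-1, …, 5, 2, 1, 4, 3] (that is, v(2)(i) = n+1-i for 1 ≤ i ≤ n-4, v(2)(n-3) = 2, v(2)(n-2)=1, v(2)(n-1)=4, v(2)(n)=3). Then for u ∈ S_n, u ≤ v(2) in Bruhat order if and only if {u(n-1), u(n)} ∩ {1,2} = ∅. -/

import Mathlib

/-- Bruhat order on `Sₙ`, via the tableau criterion: `u ≤ w` iff for every `q` and
every threshold `k`, the number of positions `i ≤ q` with `u i ≥ k` is at most the
corresponding number for `w`. -/
def bruhatLE {n : ℕ} (u w : Equiv.Perm (Fin n)) : Prop :=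
  ∀ q k : Fin n,
    (Finset.univ.filter fun i => i ≤ q ∧ k ≤ u i).card ≤
      (Finset.univ.filter fun i => i ≤ q ∧ k ≤ w i).card

open Finset in
private theorem stmt7_sum (n : ℕ) (w : Equiv.Perm (Fin n)) (q k : Fin n) :
    (univ.filter fun i => i ≤ q ∧ k ≤ w i).card +
      (univ.filter fun j => j < k ∧ w.symm j ≤ q).card = (q : ℕ) + 1 := by
  have h1 : (univ.filter fun i => i ≤ q ∧ k ≤ w i) = (Iic q).filter (fun i => k ≤ w i) := by
    ext i; simp [Finset.mem_Iic]
  have h2 : (univ.filter fun j => j < k ∧ w.symm j ≤ q).card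
      = ((Iic q).filter (fun i => ¬ k ≤ w i)).card := by
    apply Finset.card_bij' (fun j _ => w.symm j) (fun i _ => w i)
    · intro j hj
      simp only [mem_filter, mem_univ, true_and] at hj
      simp [Finset.mem_Iic, hj.2, hj.1, not_le]
    · intro i hi
      simp only [mem_filter, Finset.mem_Iic, not_le] at hi
      simp [hi.1, hi.2]
    · intro j hj; simp
    · intro i hi; simp
  rw [h1, h2, Finset.card_filter_add_card_filter_not, Fin.card_Iic]

open Finset in
private theorem stmt7_F1 (n : ℕ) (w : Equiv.Perm (Fin n)) (q k : Fin n) :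
    (k : ℕ) ≤ (univ.filter fun j => j < k ∧ w.symm j ≤ q).card + (n - 1 - (q : ℕ)) := by
  have hsplit : ((Iio k).filter fun j => w.symm j ≤ q).card
      + ((Iio k).filter fun j => ¬ w.symm j ≤ q).card = (k : ℕ) := by
    rw [Finset.card_filter_add_card_filter_not, Fin.card_Iio]
  have h1 : (univ.filter fun j => j < k ∧ w.symm j ≤ q) = (Iio k).filter fun j => w.symm j ≤ q := by
    ext j; simp [Finset.mem_Iio]
  have h2 : ((Iio k).filter fun j => ¬ w.symm j ≤ q).card ≤ n - 1 - (q : ℕ) := by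
    rw [← Fin.card_Ioi (a := q)]
    apply Finset.card_le_card_of_injOn (fun j => w.symm j)
    · intro j hj
      simp only [Finset.mem_coe, mem_filter, Finset.mem_Iio, not_le] at hj
      simpa [Finset.mem_Ioi] using hj.2
    · intro a _ b _ hab
      exact w.symm.injective hab
  rw [h1]; omega

set_option maxHeartbeats 1000000 in
theorem stmt_7 (n : ℕ) (hn : 4 ≤ n) (v : Equiv.Perm (Fin n))
    (hv : ∀ i : Fin n, (v i : ℕ) =
      if (i : ℕ) < n - 4 then n - 1 - (i : ℕ)
      else if (i : ℕ) = n - 4 then 1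
      else if (i : ℕ) = n - 3 then 0
      else if (i : ℕ) = n - 2 then 3
      else 2) :
    ∀ u : Equiv.Perm (Fin n),
      bruhatLE u v ↔
        ((u ⟨n - 2, by omega⟩ : ℕ) ≠ 0 ∧ (u ⟨n - 2, by omega⟩ : ℕ) ≠ 1 ∧
          (u ⟨n - 1, by omega⟩ : ℕ) ≠ 0 ∧ (u ⟨n - 1, by omega⟩ : ℕ) ≠ 1) := by
  open Finset in
  have hvs : ∀ j : Fin n, (v.symm j : ℕ) = if (j:ℕ) = 0 then n-3 else if (j:ℕ) = 1 then n-4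
      else if (j:ℕ) = 2 then n-1 else if (j:ℕ) = 3 then n-2 else n-1-(j:ℕ) := by
    intro j
    have hj : (j:ℕ) < n := j.isLt
    have hmn : (if (j:ℕ) = 0 then n-3 else if (j:ℕ) = 1 then n-4
        else if (j:ℕ) = 2 then n-1 else if (j:ℕ) = 3 then n-2 else n-1-(j:ℕ)) < n := by
      split_ifs <;> omega
    have key : v ⟨_, hmn⟩ = j := by
      apply Fin.ext
      rw [hv]
      simp only [Fin.val_mk]
      split_ifs <;> omega
    have h2 : v.symm j = ⟨_, hmn⟩ := by rw [Equiv.symm_apply_eq]; exact key.symm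
    rw [h2]
  open Finset in
  have hU : ∀ q k : Fin n,
      (univ.filter fun j : Fin n => j < k ∧ v.symm j ≤ q).card ≤
        (if 1 ≤ (k:ℕ) ∧ n-3 ≤ (q:ℕ) then 1 else 0)
        + (if 2 ≤ (k:ℕ) ∧ n-4 ≤ (q:ℕ) then 1 else 0)
        + (if 3 ≤ (k:ℕ) ∧ n-1 ≤ (q:ℕ) then 1 else 0)
        + (if 4 ≤ (k:ℕ) ∧ n-2 ≤ (q:ℕ) then 1 else 0)
        + ((k:ℕ) - max 4 (n-1-(q:ℕ))) := by
    intro q k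
    have hconv : (univ.filter fun j : Fin n => j < k ∧ v.symm j ≤ q).card
        = ((range n).filter fun m => m < (k:ℕ) ∧ (if m = 0 then n-3 else if m = 1 then n-4
          else if m = 2 then n-1 else if m = 3 then n-2 else n-1-m) ≤ (q:ℕ)).card := by
      refine Finset.card_bij (fun j _ => (j : ℕ)) ?_ ?_ ?_
      · intro j hj
        simp only [mem_filter, mem_univ, true_and] at hj
        simp only [mem_filter, mem_range]
        refine ⟨j.isLt, Fin.lt_def.mp hj.1, ?_⟩
        rw [← hvs j]; exact Fin.le_def.mp hj.2
      · intro a _ b _ hab; exact Fin.val_injective hab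
      · intro m hm
        simp only [mem_filter, mem_range] at hm
        refine ⟨⟨m, hm.1⟩, ?_, rfl⟩
        simp only [mem_filter, mem_univ, true_and]
        refine ⟨Fin.lt_def.mpr hm.2.1, Fin.le_def.mpr ?_⟩
        rw [hvs ⟨m, hm.1⟩]; exact hm.2.2
    rw [hconv]
    set S := ((range n).filter fun m => m < (k:ℕ) ∧ (if m = 0 then n-3 else if m = 1 then n-4
          else if m = 2 then n-1 else if m = 3 then n-2 else n-1-m) ≤ (q:ℕ)) with hSdef
    have hsub : S ⊆ (S.filter (· = 0)) ∪ (S.filter (· = 1)) ∪ (S.filter (· = 2))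
        ∪ (S.filter (· = 3)) ∪ (S.filter (4 ≤ ·)) := by
      intro m hm
      simp only [Finset.mem_union, mem_filter]
      have h4 : m = 0 ∨ m = 1 ∨ m = 2 ∨ m = 3 ∨ 4 ≤ m := by omega
      tauto
    have hmem : ∀ m ∈ S, m < n ∧ m < (k:ℕ) ∧ (if m = 0 then n-3 else if m = 1 then n-4
          else if m = 2 then n-1 else if m = 3 then n-2 else n-1-m) ≤ (q:ℕ) := by
      intro m hm
      rw [hSdef] at hm
      simp only [mem_filter, mem_range] at hm
      tauto
    have b0 : (S.filter (· = 0)).card ≤ (if 1 ≤ (k:ℕ) ∧ n-3 ≤ (q:ℕ) then 1 else 0) := by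
      split_ifs with h
      · calc (S.filter (· = 0)).card ≤ ({0} : Finset ℕ).card := by
              apply card_le_card; intro m hm; simp only [mem_filter] at hm
              simp [hm.2]
          _ = 1 := card_singleton 0
      · rw [Nat.le_zero, Finset.card_eq_zero, Finset.filter_eq_empty_iff]
        intro m hm hm0
        have := hmem m hm
        rw [hm0] at this
        norm_num at this
        omega
    have b1 : (S.filter (· = 1)).card ≤ (if 2 ≤ (k:ℕ) ∧ n-4 ≤ (q:ℕ) then 1 else 0) := by
      split_ifs with h
      · calc (S.filter (· = 1)).card ≤ ({1} : Finset ℕ).card := by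
              apply card_le_card; intro m hm; simp only [mem_filter] at hm
              simp [hm.2]
          _ = 1 := card_singleton 1
      · rw [Nat.le_zero, Finset.card_eq_zero, Finset.filter_eq_empty_iff]
        intro m hm hm1
        have := hmem m hm
        rw [hm1] at this
        norm_num at this
        omega
    have b2 : (S.filter (· = 2)).card ≤ (if 3 ≤ (k:ℕ) ∧ n-1 ≤ (q:ℕ) then 1 else 0) := by
      split_ifs with h
      · calc (S.filter (· = 2)).card ≤ ({2} : Finset ℕ).card := by
              apply card_le_card; intro m hm; simp only [mem_filter] at hm
              simp [hm.2]
          _ = 1 := card_singleton 2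
      · rw [Nat.le_zero, Finset.card_eq_zero, Finset.filter_eq_empty_iff]
        intro m hm hm1
        have := hmem m hm
        rw [hm1] at this
        norm_num at this
        omega
    have b3 : (S.filter (· = 3)).card ≤ (if 4 ≤ (k:ℕ) ∧ n-2 ≤ (q:ℕ) then 1 else 0) := by
      split_ifs with h
      · calc (S.filter (· = 3)).card ≤ ({3} : Finset ℕ).card := by
              apply card_le_card; intro m hm; simp only [mem_filter] at hm
              simp [hm.2]
          _ = 1 := card_singleton 3
      · rw [Nat.le_zero, Finset.card_eq_zero, Finset.filter_eq_empty_iff]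
        intro m hm hm1
        have := hmem m hm
        rw [hm1] at this
        norm_num at this
        omega
    have b4 : (S.filter (4 ≤ ·)).card ≤ (k:ℕ) - max 4 (n-1-(q:ℕ)) := by
      rw [← Nat.card_Ico]
      apply card_le_card
      intro m hm
      simp only [mem_filter] at hm
      have h1 := hmem m hm.1
      have h2 := hm.2
      simp only [Finset.mem_Ico]
      split_ifs at h1 <;> omega
    calc S.card ≤ ((S.filter (· = 0)) ∪ (S.filter (· = 1)) ∪ (S.filter (· = 2))
        ∪ (S.filter (· = 3)) ∪ (S.filter (4 ≤ ·))).card := card_le_card hsub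
      _ ≤ (S.filter (· = 0)).card + (S.filter (· = 1)).card + (S.filter (· = 2)).card
        + (S.filter (· = 3)).card + (S.filter (4 ≤ ·)).card := by
          refine le_trans (card_union_le _ _) ?_
          gcongr
          refine le_trans (card_union_le _ _) ?_
          gcongr
          refine le_trans (card_union_le _ _) ?_
          gcongr
          exact card_union_le _ _
      _ ≤ _ := by omega
  intro u
  open Finset in
  constructor
  · -- forward direction
    intro hb
    have hq : n - 3 < n := by omega
    have hk2 : 2 < n := by omega
    have h0n : 0 < n := by omega
    have h1n : 1 < n := by omega
    set q : Fin n := ⟨n-3, hq⟩ with hqdef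
    set k : Fin n := ⟨2, hk2⟩ with hkdef
    have hqv : (q:ℕ) = n - 3 := rfl
    have hkv : (k:ℕ) = 2 := rfl
    have hcc := hb q k
    have hs1 := stmt7_sum n u q k
    have hs2 := stmt7_sum n v q k
    have hdle : (univ.filter fun j => j < k ∧ v.symm j ≤ q).card ≤
        (univ.filter fun j => j < k ∧ u.symm j ≤ q).card := by omega
    have hdv : (univ.filter fun j => j < k ∧ v.symm j ≤ q)
        = ({⟨0, h0n⟩, ⟨1, h1n⟩} : Finset (Fin n)) := by
      ext j
      simp only [mem_filter, mem_univ, true_and, mem_insert, mem_singleton]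
      constructor
      · rintro ⟨hjk, hjq⟩
        have hj2 : (j:ℕ) < 2 := by have := Fin.lt_def.mp hjk; omega
        rcases (by omega : (j:ℕ) = 0 ∨ (j:ℕ) = 1) with h | h
        · exact Or.inl (Fin.ext h)
        · exact Or.inr (Fin.ext h)
      · rintro (rfl | rfl)
        · refine ⟨Fin.lt_def.mpr (by simp [hkv]), Fin.le_def.mpr ?_⟩
          rw [hvs]
          simp [hqv]
        · refine ⟨Fin.lt_def.mpr (by simp [hkv]), Fin.le_def.mpr ?_⟩
          rw [hvs]
          simp [hqv]
          omega
    have hpair : (({⟨0, h0n⟩, ⟨1, h1n⟩} : Finset (Fin n))).card = 2 := by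
      rw [card_insert_of_notMem (by simp [Fin.ext_iff]), card_singleton]
    rw [hdv, hpair] at hdle
    have hsubp : (univ.filter fun j => j < k ∧ u.symm j ≤ q)
        ⊆ ({⟨0, h0n⟩, ⟨1, h1n⟩} : Finset (Fin n)) := by
      intro j hj
      simp only [mem_filter, mem_univ, true_and] at hj
      have hj2 : (j:ℕ) < 2 := by have := Fin.lt_def.mp hj.1; omega
      rcases (by omega : (j:ℕ) = 0 ∨ (j:ℕ) = 1) with h | h
      · simp [Fin.ext_iff, h]
      · simp [Fin.ext_iff, h]
    have heq := Finset.eq_of_subset_of_card_le hsubp (by omega)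
    have hm0 : (⟨0, h0n⟩ : Fin n) ∈ (univ.filter fun j => j < k ∧ u.symm j ≤ q) := by
      rw [heq]; simp
    have hm1 : (⟨1, h1n⟩ : Fin n) ∈ (univ.filter fun j => j < k ∧ u.symm j ≤ q) := by
      rw [heq]; simp
    simp only [mem_filter, mem_univ, true_and] at hm0 hm1
    have hp0 : (u.symm ⟨0, h0n⟩ : ℕ) ≤ n - 3 := Fin.le_def.mp hm0.2
    have hp1 : (u.symm ⟨1, h1n⟩ : ℕ) ≤ n - 3 := Fin.le_def.mp hm1.2
    have pf2 : n - 2 < n := by omega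
    have pf1 : n - 1 < n := by omega
    refine ⟨?_, ?_, ?_, ?_⟩
    · intro h
      have e : u ⟨n-2, pf2⟩ = ⟨0, h0n⟩ := Fin.ext (by simpa using h)
      have e2 : u.symm ⟨0, h0n⟩ = ⟨n-2, pf2⟩ := (Equiv.symm_apply_eq u).mpr e.symm
      have e3 : (u.symm ⟨0, h0n⟩ : ℕ) = n-2 := by rw [e2]
      omega
    · intro h
      have e : u ⟨n-2, pf2⟩ = ⟨1, h1n⟩ := Fin.ext (by simpa using h)
      have e2 : u.symm ⟨1, h1n⟩ = ⟨n-2, pf2⟩ := (Equiv.symm_apply_eq u).mpr e.symm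
      have e3 : (u.symm ⟨1, h1n⟩ : ℕ) = n-2 := by rw [e2]
      omega
    · intro h
      have e : u ⟨n-1, pf1⟩ = ⟨0, h0n⟩ := Fin.ext (by simpa using h)
      have e2 : u.symm ⟨0, h0n⟩ = ⟨n-1, pf1⟩ := (Equiv.symm_apply_eq u).mpr e.symm
      have e3 : (u.symm ⟨0, h0n⟩ : ℕ) = n-1 := by rw [e2]
      omega
    · intro h
      have e : u ⟨n-1, pf1⟩ = ⟨1, h1n⟩ := Fin.ext (by simpa using h)
      have e2 : u.symm ⟨1, h1n⟩ = ⟨n-1, pf1⟩ := (Equiv.symm_apply_eq u).mpr e.symm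
      have e3 : (u.symm ⟨1, h1n⟩ : ℕ) = n-1 := by rw [e2]
      omega
  · -- backward direction
    rintro ⟨h1, h2, h3, h4⟩
    have h0n : 0 < n := by omega
    have h1n : 1 < n := by omega
    have pf2 : n - 2 < n := by omega
    have pf1 : n - 1 < n := by omega
    have h1' : (u ⟨n-2, pf2⟩ : ℕ) ≠ 0 := h1
    have h2' : (u ⟨n-2, pf2⟩ : ℕ) ≠ 1 := h2
    have h3' : (u ⟨n-1, pf1⟩ : ℕ) ≠ 0 := h3
    have h4' : (u ⟨n-1, pf1⟩ : ℕ) ≠ 1 := h4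
    have key0 : (u.symm ⟨0, h0n⟩ : ℕ) ≤ n - 3 := by
      have happ : u (u.symm ⟨0, h0n⟩) = ⟨0, h0n⟩ := u.apply_symm_apply _
      by_contra hc
      push_neg at hc
      have hlt : (u.symm ⟨0, h0n⟩ : ℕ) < n := (u.symm ⟨0, h0n⟩).isLt
      rcases (by omega : (u.symm ⟨0, h0n⟩ : ℕ) = n-2 ∨ (u.symm ⟨0, h0n⟩ : ℕ) = n-1) with h | h
      · apply h1'
        have e : u.symm ⟨0, h0n⟩ = ⟨n-2, pf2⟩ := Fin.ext h
        rw [← e, happ]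
      · apply h3'
        have e : u.symm ⟨0, h0n⟩ = ⟨n-1, pf1⟩ := Fin.ext h
        rw [← e, happ]
    have key1 : (u.symm ⟨1, h1n⟩ : ℕ) ≤ n - 3 := by
      have happ : u (u.symm ⟨1, h1n⟩) = ⟨1, h1n⟩ := u.apply_symm_apply _
      by_contra hc
      push_neg at hc
      have hlt : (u.symm ⟨1, h1n⟩ : ℕ) < n := (u.symm ⟨1, h1n⟩).isLt
      rcases (by omega : (u.symm ⟨1, h1n⟩ : ℕ) = n-2 ∨ (u.symm ⟨1, h1n⟩ : ℕ) = n-1) with h | h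
      · apply h2'
        have e : u.symm ⟨1, h1n⟩ = ⟨n-2, pf2⟩ := Fin.ext h
        rw [← e, happ]
      · apply h4'
        have e : u.symm ⟨1, h1n⟩ = ⟨n-1, pf1⟩ := Fin.ext h
        rw [← e, happ]
    have hne : (u.symm ⟨0, h0n⟩ : ℕ) ≠ (u.symm ⟨1, h1n⟩ : ℕ) := by
      intro h
      have := u.symm.injective (Fin.ext h : u.symm ⟨0, h0n⟩ = u.symm ⟨1, h1n⟩)
      simp [Fin.ext_iff] at this
    intro q k
    have G4 : n-3 ≤ (q:ℕ) → 1 ≤ (k:ℕ) →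
        1 ≤ (univ.filter fun j => j < k ∧ u.symm j ≤ q).card := by
      intro hq hk
      refine Finset.card_pos.mpr ⟨⟨0, h0n⟩, ?_⟩
      simp only [mem_filter, mem_univ, true_and]
      exact ⟨Fin.lt_def.mpr (by simp; omega), Fin.le_def.mpr (by omega)⟩
    have G3 : n-3 ≤ (q:ℕ) → 2 ≤ (k:ℕ) →
        2 ≤ (univ.filter fun j => j < k ∧ u.symm j ≤ q).card := by
      intro hq hk
      have hpair : (({⟨0, h0n⟩, ⟨1, h1n⟩} : Finset (Fin n))).card = 2 := by
        rw [card_insert_of_notMem (by simp [Fin.ext_iff]), card_singleton]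
      rw [← hpair]
      apply card_le_card
      intro j hj
      simp only [mem_insert, mem_singleton] at hj
      simp only [mem_filter, mem_univ, true_and]
      rcases hj with rfl | rfl
      · exact ⟨Fin.lt_def.mpr (by simp; omega), Fin.le_def.mpr (by omega)⟩
      · exact ⟨Fin.lt_def.mpr (by simp; omega), Fin.le_def.mpr (by omega)⟩
    have G2 : n-4 ≤ (q:ℕ) → 2 ≤ (k:ℕ) →
        1 ≤ (univ.filter fun j => j < k ∧ u.symm j ≤ q).card := by
      intro hq hk
      rcases (by omega : (u.symm ⟨0, h0n⟩ : ℕ) ≤ n-4 ∨ (u.symm ⟨1, h1n⟩ : ℕ) ≤ n-4) with h | h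
      · refine Finset.card_pos.mpr ⟨⟨0, h0n⟩, ?_⟩
        simp only [mem_filter, mem_univ, true_and]
        exact ⟨Fin.lt_def.mpr (by simp; omega), Fin.le_def.mpr (by omega)⟩
      · refine Finset.card_pos.mpr ⟨⟨1, h1n⟩, ?_⟩
        simp only [mem_filter, mem_univ, true_and]
        exact ⟨Fin.lt_def.mpr (by simp; omega), Fin.le_def.mpr (by omega)⟩
    have hU' := hU q k
    have hF1' := stmt7_F1 n u q k
    have hsu := stmt7_sum n u q k
    have hsv := stmt7_sum n v q k
    have hqlt : (q:ℕ) < n := q.isLt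
    have hklt : (k:ℕ) < n := k.isLt
    split_ifs at hU' <;> omega
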